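/- arXiv:2507.22596 — 4 statements merged into one kernel-verified Lean document; each statement's English description precedes it below -/
import Mathlib

section
/- Let G be a finite connected simple graph with at least three edges. Then the line graph L(G) is Hamiltonian if and only if G has a dominating closed trail. -/
open SimpleGraph

/-- A bundled simple graph: a vertex type together with a simple graph on it. -/
abbrev GraphBundle : Type 1 := Σ V : Type, SimpleGraph V

/-- One application of the line graph operation to a bundled graph. -/
def lineStep (G : GraphBundle) : GraphBundle := ⟨G.2.edgeSet, G.2.lineGraph⟩

/-- The `n`-th iterated line graph `L^n(G)`, with `L^0(G) = G`. -/
def iterLine (n : ℕ) (G : GraphBundle) : GraphBundle := lineStep^[n] G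

/-- A graph is traceable if it contains a hamiltonian path, i.e. a path
passing through every vertex. -/
def TraceableGraph {V : Type*} (G : SimpleGraph V) : Prop :=
  ∃ (u v : V) (p : G.Walk u v), p.IsPath ∧ ∀ w, w ∈ p.support

/-- A graph is hamiltonian if it contains a cycle passing through every vertex. -/
def HamiltonianGraph {V : Type*} (G : SimpleGraph V) : Prop :=
  ∃ (v : V) (p : G.Walk v v), p.IsCycle ∧ ∀ w, w ∈ p.support

/-- The hamiltonian path index: the least `n` such that `L^n(G)` has a hamiltonian path. -/
noncomputable def hpIndex (G : GraphBundle) : ℕ :=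
  sInf {n | TraceableGraph (iterLine n G).2}

/-- Degree of a vertex, as the cardinality of its neighbour set. -/
noncomputable def gdeg {V : Type*} (G : SimpleGraph V) (v : V) : ℕ :=
  (G.neighborSet v).ncard

/-- A walk in `G` together with its endpoints. -/
structure PathData {V : Type*} (G : SimpleGraph V) where
  fst : V
  snd : V
  walk : G.Walk fst snd

/-- The set of edges of a `PathData`. -/
def PathData.edgeSet {V : Type*} {G : SimpleGraph V} (p : PathData G) : Set (Sym2 V) :=
  {e | e ∈ p.walk.edges}

/-- `k(b)`: the number of edges of the branch `b` if it has an end vertex of degree 1,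
and the number of edges plus one otherwise. -/
noncomputable def PathData.k {V : Type*} {G : SimpleGraph V} (b : PathData G) : ℕ :=
  if gdeg G b.fst = 1 ∨ gdeg G b.snd = 1 then b.walk.length else b.walk.length + 1

/-- A branch: a nontrivial path whose end vertices have degree different from 2 and whose
internal vertices have degree 2. -/
def IsBranch {V : Type*} (G : SimpleGraph V) (b : PathData G) : Prop :=
  b.walk.IsPath ∧ 0 < b.walk.length ∧ gdeg G b.fst ≠ 2 ∧ gdeg G b.snd ≠ 2 ∧
    ∀ w ∈ b.walk.support, w ≠ b.fst → w ≠ b.snd → gdeg G w = 2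

/-- An endpath: a path between two leaves. -/
def IsEndpath {V : Type*} (G : SimpleGraph V) (P : PathData G) : Prop :=
  P.walk.IsPath ∧ gdeg G P.fst = 1 ∧ gdeg G P.snd = 1

/-- `b` is contained in `P` if every edge of `b` is an edge of `P`. -/
def ContainedIn {V : Type*} {G : SimpleGraph V} (b P : PathData G) : Prop :=
  b.edgeSet ⊆ P.edgeSet

/-- The endpath `P` contains two distinct branches `b₁, b₂` whose value `k b₁ + k b₂` is
maximal among all pairs of distinct branches. -/
def HasMaxPair {V : Type*} (G : SimpleGraph V) (P : PathData G) : Prop :=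
  ∃ b₁ b₂ : PathData G, IsBranch G b₁ ∧ IsBranch G b₂ ∧ b₁.edgeSet ≠ b₂.edgeSet ∧
    ContainedIn b₁ P ∧ ContainedIn b₂ P ∧
    ∀ c₁ c₂ : PathData G, IsBranch G c₁ → IsBranch G c₂ → c₁.edgeSet ≠ c₂.edgeSet →
      c₁.k + c₂.k ≤ b₁.k + b₂.k

/-- `m(T)`: the minimum, over all endpaths `P` containing a pair of distinct branches of
maximal total `k`-value, of the maximum of `k(b)` over branches `b` not contained in `P`. -/
noncomputable def mVal {V : Type*} (G : SimpleGraph V) : ℕ :=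
  sInf {m | ∃ P : PathData G, IsEndpath G P ∧ HasMaxPair G P ∧
    m = sSup {k | ∃ b : PathData G, IsBranch G b ∧ ¬ ContainedIn b P ∧ k = b.k}}

/-- A graph is a path (graph) if it has a hamiltonian path containing all of its edges. -/
def IsPathGraph {V : Type*} (G : SimpleGraph V) : Prop :=
  ∃ (u v : V) (p : G.Walk u v), p.IsPath ∧ (∀ w, w ∈ p.support) ∧
    ∀ e ∈ G.edgeSet, e ∈ p.edges

/-- A central path of a caterpillar: a path such that every vertex of the graph is at
distance at most 1 from it. -/
def IsCentralPath {V : Type*} (G : SimpleGraph V) (P : PathData G) : Prop :=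
  P.walk.IsPath ∧ ∀ w : V, w ∈ P.walk.support ∨ ∃ x ∈ P.walk.support, G.Adj x w

/-- A caterpillar is a tree in which every vertex is at distance at most one from a
central path. -/
def IsCaterpillar {V : Type*} (G : SimpleGraph V) : Prop :=
  G.IsTree ∧ ∃ P : PathData G, IsCentralPath G P

/-- A cutvertex: a vertex whose deletion disconnects the graph. -/
def IsCutvertex {V : Type*} (G : SimpleGraph V) (v : V) : Prop :=
  ¬ (G.induce {w | w ≠ v}).Connected

/-- A graph with no cutvertex. -/
def NoCutvertex {V : Type*} (G : SimpleGraph V) : Prop :=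
  ∀ v, ¬ IsCutvertex G v

/-- A block of `G`: a maximal connected subgraph of `G` having no cutvertex. -/
def IsBlock {V : Type*} {G : SimpleGraph V} (B : G.Subgraph) : Prop :=
  Maximal (fun H : G.Subgraph => H.Connected ∧ NoCutvertex H.coe) B

/-- The block-cutvertex graph of `G`: vertices are the blocks and cutvertices of `G`,
a block `B` being adjacent to a cutvertex `c` iff `c` lies in `B`. -/
def blockCutGraph {V : Type*} (G : SimpleGraph V) :
    SimpleGraph ({B : G.Subgraph // IsBlock B} ⊕ {v : V // IsCutvertex G v}) where
  Adj x y :=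
    match x, y with
    | Sum.inl B, Sum.inr c => c.1 ∈ B.1.verts
    | Sum.inr c, Sum.inl B => c.1 ∈ B.1.verts
    | _, _ => False
  symm := ⟨by rintro (B | c) (B' | c') h <;> simp_all⟩
  loopless := ⟨by rintro (B | c) h <;> simp_all⟩

section AuxHNW
open List


variable {W : Type*} {V : Type*}

lemma getLast_ne_head' {l : List W} (hnd : l.Nodup) (h2 : 2 ≤ l.length) (h : l ≠ []) :
    l.getLast h ≠ l.head h := by
  match l, h with
  | a :: l', _ =>
    have hl' : l' ≠ [] := by rintro rfl; simp at h2
    rw [List.getLast_cons hl', List.head_cons]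
    intro he
    exact (List.nodup_cons.mp hnd).1 (he ▸ List.getLast_mem hl')

lemma chain_append_singleton {R : W → W → Prop} :
    ∀ (l : List W) (a b : W), List.Chain R a l → R ((a :: l).getLast (by simp)) b →
      List.Chain R a (l ++ [b])
  | [], a, b, _, hr => by exact List.IsChain.cons_cons hr (.singleton _)
  | c :: l, a, b, hc, hr => by
    change List.IsChain R (a :: c :: l) at hc
    rw [List.isChain_cons_cons] at hc
    refine List.Chain.cons hc.1 (chain_append_singleton l c b hc.2 ?_)
    rwa [List.getLast_cons (by simp)] at hr

def ofChain (H : SimpleGraph W) : ∀ (a b : W) (l : List W),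
    List.Chain H.Adj a (l ++ [b]) → H.Walk a b
  | a, b, [], h => Walk.cons (List.isChain_pair.mp (h : List.IsChain H.Adj [a, b])) Walk.nil
  | a, b, c :: l, h =>
    Walk.cons (List.chain_cons.mp h).1 (ofChain H c b l (List.chain_cons.mp h).2)

lemma ofChain_support (H : SimpleGraph W) : ∀ (a b : W) (l : List W)
    (h : List.Chain H.Adj a (l ++ [b])), (ofChain H a b l h).support = a :: (l ++ [b])
  | a, b, [], h => rfl
  | a, b, c :: l, h => by
    exact congrArg (a :: ·) (ofChain_support H c b l _)

lemma edge_end_start_not_mem {H : SimpleGraph W} {u v : W} (q : H.Walk u v)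
    (hnd : q.support.Nodup) (huv : u ≠ v) (hlen : 2 ≤ q.length) : s(v, u) ∉ q.edges := by
  cases q with
  | nil => simp at huv
  | @cons _ w _ h q' =>
    intro hmem
    rw [Walk.edges_cons, List.mem_cons] at hmem
    rw [Walk.support_cons, List.nodup_cons] at hnd
    rcases hmem with he | he
    · rw [Sym2.eq_iff] at he
      rcases he with ⟨rfl, _⟩ | ⟨rfl, _⟩
      · exact huv rfl
      · -- q' : Walk v v
        rw [Walk.length_cons] at hlen
        have h2 : 2 ≤ q'.support.length := by
          rw [Walk.length_support]; omega
        have := getLast_ne_head' hnd.2 h2 (by simp)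
        rw [Walk.getLast_support] at this
        have hh : q'.support.head (by simp) = v := by
          cases q' <;> simp
        exact this hh.symm
    · exact hnd.1 (q'.snd_mem_support_of_mem_edges he)


lemma hamiltonian_of_cyclic_list (H : SimpleGraph W) (l : List W) (hne : l ≠ [])
    (hnd : l.Nodup) (hlen : 3 ≤ l.length) (hall : ∀ w, w ∈ l)
    (hchain : List.Chain' H.Adj l)
    (hwrap : ∀ a ∈ l.getLast?, ∀ b ∈ l.head?, H.Adj a b) :
    HamiltonianGraph H := by
  match l, hne with
  | a :: c :: l', _ =>
    have hnel' : (c :: l') ≠ [] := by simp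
    have hadj : H.Adj a c := (List.isChain_cons_cons.mp hchain).1
    have hch : List.Chain H.Adj c l' := (List.isChain_cons_cons.mp hchain).2
    have hw : H.Adj ((c :: l').getLast hnel') a := by
      apply hwrap
      · rw [List.getLast?_eq_getLast (by simp : (a :: c :: l') ≠ []), Option.mem_some_iff,
          List.getLast_cons hnel']
      · simp
    have hchain2 : List.Chain H.Adj c (l' ++ [a]) :=
      chain_append_singleton l' c a hch hw
    set q := ofChain H c a l' hchain2 with hq
    have hsupp : q.support = c :: (l' ++ [a]) := ofChain_support H c a l' hchain2
    have hsnd : q.support.Nodup := by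
      rw [hsupp]
      have : (a :: c :: l').Nodup := hnd
      have hperm : (a :: c :: l').Perm (c :: (l' ++ [a])) := by
        exact (List.Perm.swap c a l').trans
          (List.Perm.cons c (List.perm_append_singleton a l').symm)
      exact hperm.nodup this
    have hqlen : 2 ≤ q.length := by
      have := Walk.length_support q
      rw [hsupp] at this
      simp at this
      have : q.length = l'.length + 1 := by omega
      have hl3 : 1 ≤ l'.length := by simpa using hlen
      omega
    have hpath : q.IsPath := Walk.IsPath.mk' hsnd
    have hca : c ≠ a := fun h => (List.nodup_cons.mp hnd).1 (h ▸ (List.mem_cons_self : c ∈ c :: l'))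
    have hnotmem : s(a, c) ∉ q.edges := edge_end_start_not_mem q hsnd hca hqlen
    refine ⟨a, Walk.cons hadj q, ?_, ?_⟩
    · exact (Walk.cons_isCycle_iff q hadj).mpr ⟨hpath, hnotmem⟩
    · intro w
      have hw := hall w
      rw [Walk.support_cons, hsupp]
      simp only [List.mem_cons, List.mem_append, List.mem_singleton] at hw ⊢
      tauto
end AuxHNW

section AuxHNW2
open List
variable {V : Type*} {G : SimpleGraph V}

lemma adj_of_mem_edge {e : Sym2 V} {a b : V} (he : e ∈ G.edgeSet) (ha : a ∈ e) (hb : b ∈ e)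
    (hab : a ≠ b) : G.Adj a b := by
  have : e = s(a, b) := (Sym2.mem_and_mem_iff hab).mp ⟨ha, hb⟩
  rwa [this, mem_edgeSet] at he

lemma walk_of_edgeChain :
    ∀ (es : List (Sym2 V)) (e : Sym2 V) (a b : V), a ∈ e → e ∈ G.edgeSet →
      (∀ f ∈ es, f ∈ G.edgeSet) →
      List.Chain (fun f g => ∃ x, x ∈ f ∧ x ∈ g) e es →
      b ∈ (e :: es).getLast (by simp) →
      ∃ p : G.Walk a b, p.edges <+ (e :: es) ∧ ∀ f ∈ e :: es, ∃ x ∈ p.support, x ∈ f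
  | [], e, a, b, ha, he, _, _, hb => by
    simp only [List.getLast_singleton] at hb
    by_cases hab : a = b
    · subst hab
      refine ⟨Walk.nil, by simp, ?_⟩
      intro g hg
      rw [List.mem_singleton] at hg; subst hg
      exact ⟨a, by simp, ha⟩
    · refine ⟨Walk.cons (adj_of_mem_edge he ha hb hab) Walk.nil, ?_, ?_⟩
      · have : e = s(a, b) := (Sym2.mem_and_mem_iff hab).mp ⟨ha, hb⟩
        simp [this]
      · intro g hg
        rw [List.mem_singleton] at hg; subst hg
        exact ⟨a, by simp, ha⟩
  | f :: es', e, a, b, ha, he, hes, hch, hb => by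
    change List.IsChain _ (e :: f :: es') at hch
    rw [List.isChain_cons_cons] at hch
    obtain ⟨⟨w, hwe, hwf⟩, hch'⟩ := hch
    have hb' : b ∈ (f :: es').getLast (by simp) := by
      rwa [List.getLast_cons (by simp : (f :: es') ≠ [])] at hb
    obtain ⟨p', hsub, hdom⟩ := walk_of_edgeChain es' f w b hwf (hes f (by simp))
      (fun g hg => hes g (by simp [hg])) hch' hb'
    by_cases haw : a = w
    · subst haw
      refine ⟨p', hsub.trans (List.sublist_cons_self e _), ?_⟩
      intro g hg
      rcases List.mem_cons.mp hg with rfl | hg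
      · exact ⟨a, p'.start_mem_support, ha⟩
      · exact hdom g hg
    · have hadj : G.Adj a w := adj_of_mem_edge he ha hwe haw
      have heq : e = s(a, w) := (Sym2.mem_and_mem_iff haw).mp ⟨ha, hwe⟩
      refine ⟨Walk.cons hadj p', ?_, ?_⟩
      · rw [Walk.edges_cons, ← heq]
        exact List.cons_sublist_cons.mpr hsub
      · intro g hg
        rcases List.mem_cons.mp hg with rfl | hg
        · exact ⟨a, by simp, ha⟩
        · obtain ⟨x, hx, hxg⟩ := hdom g hg
          exact ⟨x, by simp [hx], hxg⟩
end AuxHNW2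

section AuxHNW3
open List
variable {V : Type*} [DecidableEq V] {G : SimpleGraph V}

def extList : {x y : V} → G.Walk x y → List (Sym2 V) → List (Sym2 V)
  | x, _, .nil, F => F.filter (fun f => decide (x ∈ f))
  | x, _, .cons (v := z) _ w, F =>
      F.filter (fun f => decide (x ∈ f)) ++ s(x, z) :: extList w (F.filter (fun f => decide (x ∉ f)))

lemma mem_extList {x y : V} (w : G.Walk x y) (F : List (Sym2 V)) (g : Sym2 V) :
    g ∈ extList w F ↔ (g ∈ F ∧ ∃ v ∈ w.support, v ∈ g) ∨ g ∈ w.edges := by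
  induction w generalizing F with
  | nil => simp [extList]
  | @cons x z y h w ih =>
    simp only [extList, List.mem_append, List.mem_cons, List.mem_filter, ih,
      Walk.support_cons, Walk.edges_cons, decide_eq_true_eq]
    constructor
    · rintro (⟨hF, hx⟩ | rfl | ⟨⟨hF, hxg⟩, v, hv, hvg⟩ | he)
      · exact Or.inl ⟨hF, _, Or.inl rfl, hx⟩
      · exact Or.inr (Or.inl rfl)
      · exact Or.inl ⟨hF, v, Or.inr hv, hvg⟩
      · exact Or.inr (Or.inr he)
    · rintro (⟨hF, v, hv, hvg⟩ | rfl | he)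
      · rcases hv with rfl | hv
        · exact Or.inl ⟨hF, hvg⟩
        · by_cases hxg : x ∈ g
          · exact Or.inl ⟨hF, hxg⟩
          · exact Or.inr (Or.inr (Or.inl ⟨⟨hF, hxg⟩, v, hv, hvg⟩))
      · exact Or.inr (Or.inl rfl)
      · exact Or.inr (Or.inr (Or.inr he))

lemma extList_nodup {x y : V} (w : G.Walk x y) (F : List (Sym2 V)) (hF : F.Nodup)
    (hdisj : ∀ f ∈ F, f ∉ w.edges) (ht : w.IsTrail) : (extList w F).Nodup := by
  induction w generalizing F with
  | nil => exact hF.filter _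
  | @cons x z y h w ih =>
    have hend : s(x, z) ∉ w.edges := by
      have := ht.edges_nodup
      rw [Walk.edges_cons, List.nodup_cons] at this
      exact this.1
    have htw : w.IsTrail := ht.of_cons
    have hdisj' : ∀ f ∈ F.filter (fun f => decide (x ∉ f)), f ∉ w.edges := fun f hf hfe =>
      hdisj f (List.mem_of_mem_filter hf) (by simp [Walk.edges_cons, hfe])
    rw [extList, List.nodup_append]
    refine ⟨hF.filter _, ?_, ?_⟩
    · rw [List.nodup_cons]
      constructor
      · rw [mem_extList]
        rintro (⟨hmem, -⟩ | hmem)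
        · exact hdisj _ (List.mem_of_mem_filter hmem) (by simp)
        · exact hend hmem
      · exact ih _ (hF.filter _) hdisj' htw
    · intro g hg g' hg' hgg'
      subst hgg'
      have hgF := List.mem_of_mem_filter hg
      have hgx : x ∈ g := by simpa using (List.mem_filter.mp hg).2
      rcases List.mem_cons.mp hg' with rfl | hg'
      · exact hdisj _ hgF (by simp)
      · rw [mem_extList] at hg'
        rcases hg' with ⟨hmem, -⟩ | hmem
        · exact (by simpa using (List.mem_filter.mp hmem).2 : x ∉ g) hgx
        · exact hdisj _ hgF (by simp [Walk.edges_cons, hmem])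

lemma pairwise_shares {A : List (Sym2 V)} (hnd : A.Nodup) {x : V} (hx : ∀ g ∈ A, x ∈ g) :
    List.Chain' (fun g g' => g ≠ g' ∧ ∃ v, v ∈ g ∧ v ∈ g') A := by
  refine List.Pairwise.isChain (List.Pairwise.imp_of_mem ?_ hnd)
  intro a b ha hb hne
  exact ⟨hne, x, hx a ha, hx b hb⟩

lemma extList_chain {x y : V} (w : G.Walk x y) (F : List (Sym2 V)) (hF : F.Nodup)
    (hdisj : ∀ f ∈ F, f ∉ w.edges) (ht : w.IsTrail) :
    List.Chain' (fun g g' => g ≠ g' ∧ ∃ v, v ∈ g ∧ v ∈ g') (extList w F)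
    ∧ (∀ g ∈ (extList w F).head?, x ∈ g)
    ∧ (∀ g ∈ (extList w F).getLast?, y ∈ g) := by
  induction w generalizing F with
  | nil =>
    refine ⟨pairwise_shares (hF.filter _) (fun g hg => by simpa using (List.mem_filter.mp hg).2),
      ?_, ?_⟩
    · intro g hg
      simpa using (List.mem_filter.mp (List.mem_of_mem_head? hg)).2
    · intro g hg
      simpa using (List.mem_filter.mp (List.mem_of_mem_getLast? hg)).2
  | @cons x z y h w ih =>
    have hend : s(x, z) ∉ w.edges := by
      have := ht.edges_nodup
      rw [Walk.edges_cons, List.nodup_cons] at this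
      exact this.1
    have htw : w.IsTrail := ht.of_cons
    set F' := F.filter (fun f => decide (x ∉ f)) with hF'def
    have hdisj' : ∀ f ∈ F', f ∉ w.edges := fun f hf hfe =>
      hdisj f (List.mem_of_mem_filter hf) (by simp [Walk.edges_cons, hfe])
    obtain ⟨ihchain, ihhead, ihlast⟩ := ih F' (hF.filter _) hdisj' htw
    set A := F.filter (fun f => decide (x ∈ f)) with hAdef
    have hAx : ∀ g ∈ A, x ∈ g := fun g hg => by simpa using (List.mem_filter.mp hg).2
    have hBne : ∀ g ∈ extList w F', g ≠ s(x, z) := by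
      intro g hg
      rw [mem_extList] at hg
      rcases hg with ⟨hmem, -⟩ | hmem
      · exact fun hgs => hdisj _ (List.mem_of_mem_filter hmem) (by simp [hgs])
      · exact fun hgs => hend (hgs ▸ hmem)
    have hchain : List.Chain' (fun g g' => g ≠ g' ∧ ∃ v, v ∈ g ∧ v ∈ g')
        (A ++ s(x, z) :: extList w F') := by
      show List.IsChain _ _
      rw [List.isChain_append]
      refine ⟨pairwise_shares (hF.filter _) hAx, ?_, ?_⟩
      · rw [List.isChain_cons]
        refine ⟨?_, ihchain⟩
        intro g hg
        refine ⟨(hBne g (List.mem_of_mem_head? hg)).symm, z, by simp, ihhead g hg⟩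
      · intro g hg g' hg'
        rw [List.head?_cons, Option.mem_some_iff] at hg'
        subst hg'
        have hgA := List.mem_of_mem_getLast? hg
        refine ⟨?_, x, hAx g hgA, by simp⟩
        exact fun hgs => hdisj _ (List.mem_of_mem_filter hgA) (by simp [hgs])
    refine ⟨by rw [extList]; exact hchain, ?_, ?_⟩
    · intro g hg
      rw [extList, List.head?_append] at hg
      rcases hA : A with _ | ⟨a, A'⟩
      · rw [hAdef] at hA
        rw [hA] at hg
        simp only [List.head?_nil, Option.none_or, List.head?_cons,
          Option.mem_some_iff] at hg
        subst hg; simp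
      · rw [hAdef] at hA
        rw [hA] at hg
        simp only [List.head?_cons, Option.or_some, Option.mem_some_iff] at hg
        subst hg
        exact hAx _ (by rw [hAdef, hA]; exact List.mem_cons_self)
    · intro g hg
      rw [extList, List.getLast?_append,
        Option.or_of_isSome (List.getLast?_isSome.mpr (by simp))] at hg
      rcases hB : extList w F' with _ | ⟨b, B'⟩
      · rw [hB] at hg
        simp only [List.getLast?_singleton, Option.mem_some_iff] at hg
        subst hg
        have hwnil : w.edges = [] := by
          rcases hw : w.edges with _ | ⟨e, es⟩
          · rfl
          · exfalso
            have : e ∈ extList w F' := by rw [mem_extList]; exact Or.inr (by simp [hw])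
            rw [hB] at this; simp at this
        have : w.length = 0 := by rw [← Walk.length_edges, hwnil]; rfl
        have hyz : z = y := w.eq_of_length_eq_zero this
        simp [← hyz]
      · rw [hB, List.getLast?_cons_cons] at hg
        exact ihlast g (hB ▸ hg)
end AuxHNW3

/-- Harary–Nash-Williams: for a finite connected simple graph `G` with at
least three edges, `L(G)` is hamiltonian iff `G` has a dominating closed trail. -/
theorem lineGraph_hamiltonian_iff_dominating_closed_trail {V : Type*} [Fintype V]
    (G : SimpleGraph V) (hG : G.Connected) (hE : 3 ≤ G.edgeSet.ncard) :
    HamiltonianGraph G.lineGraph ↔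
      ∃ (v : V) (t : G.Walk v v), t.IsTrail ∧
        ∀ e ∈ G.edgeSet, ∃ x ∈ t.support, x ∈ e := by
  classical
  constructor
  · rintro ⟨e₀, p, hc, hall⟩
    have hLnd : p.support.tail.Nodup := hc.support_nodup
    have hlen3 : 3 ≤ p.length := hc.three_le_length
    have hLlen : p.support.tail.length = p.length := by
      rw [List.length_tail, Walk.length_support]; omega
    have hLne : p.support.tail ≠ [] := by
      intro h; rw [h] at hLlen; simp at hLlen; omega
    obtain ⟨f, L', hLc⟩ := List.exists_cons_of_ne_nil hLne
    have hsupp : p.support = e₀ :: f :: L' := by rw [p.support_eq_cons, hLc]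
    have hLnd' : (f :: L').Nodup := hLc ▸ hLnd
    have hchain0 : List.Chain G.lineGraph.Adj e₀ (f :: L') := by
      have := p.isChain_adj_support
      rwa [hsupp] at this
    have hgl? : (f :: L').getLast? = some e₀ := by
      have h4 : p.support.getLast? = some e₀ := by
        rw [List.getLast?_eq_getLast (l := p.support) (by simp), p.getLast_support]
      rwa [hsupp, List.getLast?_cons_cons] at h4
    have hmemL : ∀ e : G.edgeSet, e ∈ f :: L' := by
      intro e
      have h := hall e
      rw [hsupp, List.mem_cons] at h
      rcases h with h | h
      · rw [h]; exact List.mem_of_mem_getLast? hgl?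
      · exact h
    have hadjlast : G.lineGraph.Adj e₀ f := (List.chain_cons.mp hchain0).1
    obtain ⟨-, v₀, hv₀e, hv₀f⟩ := lineGraph_adj_iff_exists.mp hadjlast
    have hch' : List.Chain G.lineGraph.Adj f L' := (List.chain_cons.mp hchain0).2
    have hchmap : List.Chain (fun g g' : Sym2 V => ∃ x, x ∈ g ∧ x ∈ g')
        (↑f) (L'.map Subtype.val) := by
      change List.IsChain _ ((f :: L').map Subtype.val)
      rw [List.isChain_map]
      exact List.IsChain.imp (fun a b hab => (lineGraph_adj_iff_exists.mp hab).2) hch'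
    have hblast : v₀ ∈ ((↑f : Sym2 V) :: L'.map Subtype.val).getLast (by simp) := by
      have h6 : ((↑f : Sym2 V) :: L'.map Subtype.val).getLast (by simp) = ↑e₀ := by
        have h7 := List.getLast?_eq_getLast (l := (↑f : Sym2 V) :: L'.map Subtype.val) (by simp)
        have h8 : ((↑f : Sym2 V) :: L'.map Subtype.val).getLast? = some ↑e₀ := by
          have h9 : ((↑f : Sym2 V) :: L'.map Subtype.val) = (f :: L').map Subtype.val := rfl
          rw [h9, List.getLast?_map, hgl?]; rfl
        rw [h8] at h7
        exact (Option.some_injective _ h7).symm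
      rw [h6]
      exact hv₀e
    obtain ⟨t, hsub, hdomt⟩ := walk_of_edgeChain (L'.map Subtype.val) (↑f) v₀ v₀ hv₀f f.2
      (fun g hg => by obtain ⟨a, -, rfl⟩ := List.mem_map.mp hg; exact a.2) hchmap hblast
    refine ⟨v₀, t, ?_, ?_⟩
    · rw [Walk.isTrail_def]
      refine hsub.nodup ?_
      have : ((f :: L').map Subtype.val).Nodup := hLnd'.map Subtype.val_injective
      simpa using this
    · intro e he
      have hmm : e ∈ ((↑f : Sym2 V) :: L'.map Subtype.val) := by
        rcases List.mem_cons.mp (hmemL ⟨e, he⟩) with h | h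
        · exact List.mem_cons.mpr (Or.inl (congrArg Subtype.val h))
        · exact List.mem_cons.mpr (Or.inr (List.mem_map.mpr ⟨⟨e, he⟩, h, rfl⟩))
      exact hdomt e hmm
  · rintro ⟨v, t, ht, hdom⟩
    set F := ((G.edgeSet.toFinite.toFinset.toList).filter
      (fun f => decide (f ∉ t.edges))) with hFdef
    have hFmem : ∀ g, g ∈ F ↔ g ∈ G.edgeSet ∧ g ∉ t.edges := by
      intro g
      simp only [hFdef, List.mem_filter, Finset.mem_toList, Set.Finite.mem_toFinset,
        decide_eq_true_eq]
    have hFnd : F.Nodup := (Finset.nodup_toList _).filter _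
    have hFdisj : ∀ g ∈ F, g ∉ t.edges := fun g hg => ((hFmem g).mp hg).2
    have hmem : ∀ g, g ∈ extList t F ↔ g ∈ G.edgeSet := by
      intro g
      rw [mem_extList]
      constructor
      · rintro (⟨hg, -⟩ | hg)
        · exact ((hFmem g).mp hg).1
        · exact t.edges_subset_edgeSet hg
      · intro hg
        by_cases hge : g ∈ t.edges
        · exact Or.inr hge
        · exact Or.inl ⟨(hFmem g).mpr ⟨hg, hge⟩, hdom g hg⟩
    obtain ⟨hchain, hhead, hlast⟩ := extList_chain t F hFnd hFdisj ht
    have hnd := extList_nodup t F hFnd hFdisj ht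
    set l₀ := extList t F with hl₀
    have hsubE : ∀ g ∈ l₀, g ∈ G.edgeSet := fun g hg => (hmem g).mp hg
    set l : List G.edgeSet := l₀.attachWith (· ∈ G.edgeSet) hsubE with hldef
    have hmap : l.map Subtype.val = l₀ := List.attachWith_map_subtype_val _
    have h3 : 3 ≤ l₀.length := by
      refine le_trans hE (le_trans (Set.ncard_le_ncard (fun g hg => ?_)
        (l₀.toFinset : Set (Sym2 V)).toFinite) ?_)
      · simp only [Finset.coe_sort_coe, Finset.mem_coe, List.mem_toFinset]
        exact (hmem g).mpr hg
      · rw [Set.ncard_coe_finset, List.toFinset_card_of_nodup hnd]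
    have hllen : l.length = l₀.length := by rw [← hmap, List.length_map]
    have hlne : l ≠ [] := by
      intro h; rw [h] at hllen; simp at hllen; omega
    have hlnd : l.Nodup := List.Nodup.of_map Subtype.val (hmap ▸ hnd)
    have hlall : ∀ e : G.edgeSet, e ∈ l := by
      intro e
      have : ↑e ∈ l.map Subtype.val := hmap ▸ (hmem ↑e).mpr e.2
      obtain ⟨a, ha, hae⟩ := List.mem_map.mp this
      rwa [Subtype.ext hae] at ha
    have hlchain : List.Chain' G.lineGraph.Adj l := by
      have : List.Chain' (fun a b : G.edgeSet =>
          (↑a : Sym2 V) ≠ ↑b ∧ ∃ x, x ∈ (↑a : Sym2 V) ∧ x ∈ (↑b : Sym2 V)) l :=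
        (List.isChain_map (R := fun g g' : Sym2 V => g ≠ g' ∧ ∃ v, v ∈ g ∧ v ∈ g') Subtype.val).mp
          (hmap ▸ hchain)
      exact List.IsChain.imp (fun a b hab =>
        lineGraph_adj_iff_exists.mpr ⟨fun h => hab.1 (by rw [h]), hab.2⟩) this
    refine hamiltonian_of_cyclic_list _ l hlne hlnd (by omega) hlall hlchain ?_
    intro a ha b hb
    have hva : v ∈ (↑a : Sym2 V) := by
      apply hlast
      rw [← hmap, List.getLast?_map]
      exact Option.mem_map_of_mem _ ha
    have hvb : v ∈ (↑b : Sym2 V) := by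
      apply hhead
      rw [← hmap, List.head?_map]
      exact Option.mem_map_of_mem _ hb
    have hab : a ≠ b := by
      rw [List.getLast?_eq_getLast hlne, Option.mem_some_iff] at ha
      rw [List.head?_eq_head hlne, Option.mem_some_iff] at hb
      rw [← ha, ← hb]
      exact getLast_ne_head' hlnd (by omega) hlne
    exact lineGraph_adj_iff_exists.mpr ⟨hab, v, hva, hvb⟩
end

section
/- Let G be a finite connected simple graph with at least one edge. Then the line graph L(G) is traceable (contains a Hamiltonian path) if and only if G has a dominating trail. -/
open SimpleGraph

section A1
variable {V : Type*}

/-- Build a walk from a chain of adjacent vertices. -/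
lemma walk_of_chain {W : Type*} (H : SimpleGraph W) (a : W) :
    ∀ (l : List W), List.Chain H.Adj a l → ∃ b, ∃ p : H.Walk a b, p.support = a :: l := by
  intro l
  induction l generalizing a with
  | nil => exact fun _ => ⟨a, Walk.nil, rfl⟩
  | cons c r ih =>
    intro hc
    rw [show List.Chain H.Adj a (c :: r) ↔ _ from List.isChain_cons_cons] at hc
    obtain ⟨b, p, hp⟩ := ih c hc.2
    exact ⟨b, Walk.cons hc.1 p, by simp [hp]⟩

/-- From a hamiltonian-path-like chain of edges, build a dominating trail. -/
lemma trail_of_chain (G : SimpleGraph V) :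
    ∀ (r : List G.edgeSet) (e : G.edgeSet),
      List.Chain' G.lineGraph.Adj (e :: r) → (e :: r).Nodup →
      ∃ a b, ∃ t : G.Walk a b, t.IsTrail ∧ a ∈ (e : Sym2 V) ∧
        (∀ f ∈ t.edges, ∃ g ∈ r, (g : Sym2 V) = f) ∧
        ∀ g ∈ e :: r, ∃ x ∈ t.support, x ∈ (g : Sym2 V) := by
  intro r
  induction r with
  | nil =>
    intro e _ _
    refine ⟨(e : Sym2 V).out.1, _, Walk.nil, Walk.IsTrail.nil, Sym2.out_fst_mem _, by simp, ?_⟩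
    intro g hg
    simp only [List.mem_singleton] at hg
    subst hg
    exact ⟨(g : Sym2 V).out.1, by simp, Sym2.out_fst_mem _⟩
  | cons e' r' ih =>
    intro e hc hn
    obtain ⟨a', b', t', ht', ha', hed', hdom'⟩ :=
      ih e' (List.isChain_cons_cons.mp hc).2 (List.Nodup.of_cons hn)
    have hadj : G.lineGraph.Adj e e' := (List.isChain_cons_cons.mp hc).1
    rw [lineGraph_adj_iff_exists] at hadj
    obtain ⟨hne, w, hw1, hw2⟩ := hadj
    by_cases hwa : w = a'
    · refine ⟨a', b', t', ht', hwa ▸ hw1, ?_, ?_⟩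
      · exact fun f hf => (hed' f hf).imp fun g hg => ⟨List.mem_cons_of_mem _ hg.1, hg.2⟩
      · intro g hg
        rcases List.mem_cons.mp hg with rfl | hg
        · exact ⟨a', t'.start_mem_support, hwa ▸ hw1⟩
        · exact hdom' g hg
    · have hee' : (e' : Sym2 V) = s(w, a') := ((Sym2.mem_and_mem_iff hwa).mp ⟨hw2, ha'⟩)
      have hGadj : G.Adj w a' := by
        have := e'.2
        rwa [hee', SimpleGraph.mem_edgeSet] at this
      have hnotin : s(w, a') ∉ t'.edges := by
        intro hmem
        obtain ⟨g, hg, hgval⟩ := hed' _ hmem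
        have : g = e' := Subtype.ext (by rw [hgval, hee'])
        subst this
        exact (List.nodup_cons.mp (List.Nodup.of_cons hn)).1 hg
      refine ⟨w, b', Walk.cons hGadj t', (Walk.isTrail_cons _ _).mpr ⟨ht', hnotin⟩, hw1, ?_, ?_⟩
      · intro f hf
        rw [Walk.edges_cons, List.mem_cons] at hf
        rcases hf with rfl | hf
        · exact ⟨e', List.mem_cons_self, hee'⟩
        · exact (hed' f hf).imp fun g hg => ⟨List.mem_cons_of_mem _ hg.1, hg.2⟩
      · intro g hg
        rcases List.mem_cons.mp hg with rfl | hg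
        · exact ⟨w, by simp, hw1⟩
        · obtain ⟨x, hx, hxg⟩ := hdom' g hg
          exact ⟨x, by simp [hx], hxg⟩

end A1

section A2
variable {V : Type*} [Fintype V]

/-- Relation on `Sym2 V`: distinct and sharing a vertex. -/
def erel (e f : Sym2 V) : Prop := e ≠ f ∧ ∃ x, x ∈ e ∧ x ∈ f

variable (G : SimpleGraph V)

/-- Edges of `G` containing `x`, not in `T`, avoiding `B`. -/
noncomputable def extraEdges (T : List (Sym2 V)) (x : V) (B : List V) : List (Sym2 V) :=
  (@Finset.filter _ (fun e => x ∈ e ∧ e ∉ T ∧ ∀ b ∈ B, b ∉ e) (Classical.decPred _)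
    G.edgeSet.toFinite.toFinset).toList

lemma mem_extraEdges {T : List (Sym2 V)} {x : V} {B : List V} {e : Sym2 V} :
    e ∈ extraEdges G T x B ↔
      e ∈ G.edgeSet ∧ x ∈ e ∧ e ∉ T ∧ ∀ b ∈ B, b ∉ e := by
  simp [extraEdges, Finset.mem_filter, Set.Finite.mem_toFinset]

lemma nodup_extraEdges {T : List (Sym2 V)} {x : V} {B : List V} :
    (extraEdges G T x B).Nodup := Finset.nodup_toList _

lemma chain'_extraEdges {T : List (Sym2 V)} {x : V} {B : List V} :
    List.Chain' erel (extraEdges G T x B) := by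
  refine List.Pairwise.isChain ?_
  refine (nodup_extraEdges G).imp_of_mem ?_
  intro a b ha hb hne
  exact ⟨hne, x, (mem_extraEdges G |>.mp ha).2.1, (mem_extraEdges G |>.mp hb).2.1⟩

/-- The big list of edges along a dominating trail. -/
noncomputable def edgeList (T : List (Sym2 V)) :
    ∀ {u v : V}, G.Walk u v → List V → List (Sym2 V)
  | u, _, .nil, B => extraEdges G T u B
  | u, _, .cons (v := w) _ t, B => extraEdges G T u B ++ s(u, w) :: edgeList T t (u :: B)

lemma edgeList_mem_edgeSet {T : List (Sym2 V)} :
    ∀ {u v : V} (t : G.Walk u v) (B : List V), ∀ e ∈ edgeList G T t B, e ∈ G.edgeSet := by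
  intro u v t
  induction t with
  | nil =>
    intro B e he
    exact ((mem_extraEdges G).mp he).1
  | cons h t ih =>
    intro B e he
    simp only [edgeList, List.mem_append, List.mem_cons] at he
    rcases he with he | rfl | he
    · exact ((mem_extraEdges G).mp he).1
    · exact h
    · exact ih _ e he

lemma edgeList_structure {T : List (Sym2 V)} :
    ∀ {u v : V} (t : G.Walk u v) (B : List V),
      ∀ e ∈ edgeList G T t B, e ∈ t.edges ∨ (e ∉ T ∧ ∀ b ∈ B, b ∉ e) := by
  intro u v t
  induction t with
  | nil =>
    intro B e he
    exact Or.inr ((mem_extraEdges G).mp he).2.2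
  | cons h t ih =>
    intro B e he
    simp only [edgeList, List.mem_append, List.mem_cons] at he
    rcases he with he | rfl | he
    · exact Or.inr ((mem_extraEdges G).mp he).2.2
    · exact Or.inl (by simp)
    · rcases ih (_ :: B) e he with h1 | h2
      · exact Or.inl (by simp [h1])
      · exact Or.inr ⟨h2.1, fun b hb => h2.2 b (List.mem_cons_of_mem _ hb)⟩

lemma edgeList_head {T : List (Sym2 V)} :
    ∀ {u v : V} (t : G.Walk u v) (B : List V),
      ∀ e ∈ (edgeList G T t B).head?, u ∈ e := by
  intro u v t
  induction t with
  | nil =>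
    intro B e he
    exact ((mem_extraEdges G).mp (List.mem_of_mem_head? he)).2.1
  | cons h t ih =>
    rename_i u' m' v'
    intro B e he
    simp only [edgeList] at he
    rcases hx : (extraEdges G T u' B) with _ | ⟨a, l⟩
    · rw [hx, List.nil_append, List.head?_cons, Option.mem_some_iff] at he
      subst he
      simp
    · rw [hx, List.cons_append, List.head?_cons, Option.mem_some_iff] at he
      subst he
      have : a ∈ extraEdges G T u' B := by rw [hx]; exact List.mem_cons_self
      exact ((mem_extraEdges G).mp this).2.1

lemma edgeList_trail_subset {T : List (Sym2 V)} :
    ∀ {u v : V} (t : G.Walk u v) (B : List V), ∀ e ∈ t.edges, e ∈ edgeList G T t B := by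
  intro u v t
  induction t with
  | nil => intro B e he; simp at he
  | cons h t ih =>
    intro B e he
    rw [Walk.edges_cons, List.mem_cons] at he
    simp only [edgeList, List.mem_append, List.mem_cons]
    rcases he with rfl | he
    · exact Or.inr (Or.inl rfl)
    · exact Or.inr (Or.inr (ih _ e he))

lemma edgeList_complete {T : List (Sym2 V)} :
    ∀ {u v : V} (t : G.Walk u v) (B : List V) (e : Sym2 V), e ∈ G.edgeSet → e ∉ T →
      (∀ b ∈ B, b ∉ e) → (∃ x ∈ t.support, x ∈ e) → e ∈ edgeList G T t B := by
  intro u v t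
  induction t with
  | nil =>
    intro B e he hT hB hx
    obtain ⟨x, hx1, hx2⟩ := hx
    simp only [Walk.support_nil, List.mem_singleton] at hx1
    subst hx1
    exact (mem_extraEdges G).mpr ⟨he, hx2, hT, hB⟩
  | cons h t ih =>
    rename_i u' m' v'
    intro B e he hT hB hx
    simp only [edgeList, List.mem_append, List.mem_cons]
    by_cases hu : u' ∈ e
    · exact Or.inl ((mem_extraEdges G).mpr ⟨he, hu, hT, hB⟩)
    · obtain ⟨x, hx1, hx2⟩ := hx
      rw [Walk.support_cons, List.mem_cons] at hx1
      rcases hx1 with rfl | hx1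
      · exact absurd hx2 hu
      · refine Or.inr (Or.inr (ih _ e he hT ?_ ⟨x, hx1, hx2⟩))
        intro b hb
        rcases List.mem_cons.mp hb with rfl | hb
        · exact hu
        · exact hB b hb

lemma edgeList_nodup {T : List (Sym2 V)} :
    ∀ {u v : V} (t : G.Walk u v) (B : List V), t.IsTrail → (∀ e ∈ t.edges, e ∈ T) →
      (edgeList G T t B).Nodup := by
  intro u v t
  induction t with
  | nil => intro B _ _; exact nodup_extraEdges G
  | cons h t ih =>
    intro B htr hsub
    have htr' : t.IsTrail := ((Walk.isTrail_cons _ _).mp htr).1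
    have hnot : s(_, _) ∉ t.edges := ((Walk.isTrail_cons _ _).mp htr).2
    have hsub' : ∀ e ∈ t.edges, e ∈ T := fun e he => hsub e (by simp [he])
    simp only [edgeList]
    rw [List.nodup_append]
    refine ⟨nodup_extraEdges G, ?_, ?_⟩
    · rw [List.nodup_cons]
      refine ⟨?_, ih _ htr' hsub'⟩
      intro hmem
      rcases edgeList_structure G t _ _ hmem with h1 | h2
      · exact hnot h1
      · exact h2.2 _ (List.mem_cons_self) (by simp)
    · intro a ha _ hb rfl
      have haT : a ∉ T := ((mem_extraEdges G).mp ha).2.2.1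
      have hau : _ ∈ a := ((mem_extraEdges G).mp ha).2.1
      rcases List.mem_cons.mp hb with rfl | hb
      · exact haT (hsub _ (by simp))
      · rcases edgeList_structure G t _ _ hb with h1 | h2
        · exact haT (hsub' a h1)
        · exact h2.2 _ (List.mem_cons_self) hau

lemma edgeList_chain' {T : List (Sym2 V)} :
    ∀ {u v : V} (t : G.Walk u v) (B : List V), t.IsTrail → (∀ e ∈ t.edges, e ∈ T) →
      List.Chain' erel (edgeList G T t B) := by
  intro u v t
  induction t with
  | nil => intro B _ _; exact chain'_extraEdges G
  | cons h t ih =>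
    intro B htr hsub
    have htr' : t.IsTrail := ((Walk.isTrail_cons _ _).mp htr).1
    have hnot : s(_, _) ∉ t.edges := ((Walk.isTrail_cons _ _).mp htr).2
    have hsub' : ∀ e ∈ t.edges, e ∈ T := fun e he => hsub e (by simp [he])
    simp only [edgeList]
    rw [show List.Chain' erel _ ↔ _ from List.isChain_append]
    refine ⟨chain'_extraEdges G, ?_, ?_⟩
    · rw [List.isChain_cons]
      refine ⟨?_, ih _ htr' hsub'⟩
      intro y hy
      have hymem : y ∈ edgeList G T t (_ :: B) := List.mem_of_mem_head? hy
      have hyw : _ ∈ y := edgeList_head G t _ y hy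
      refine ⟨?_, _, by simp, hyw⟩
      rcases edgeList_structure G t _ _ hymem with h1 | h2
      · exact fun hc => hnot (hc ▸ h1)
      · intro hc
        exact h2.2 _ (List.mem_cons_self) (by rw [← hc]; simp)
    · intro x hx y hy
      have hxmem : x ∈ extraEdges G T _ B := List.mem_of_mem_getLast? hx
      rw [List.head?_cons, Option.mem_some_iff] at hy
      subst hy
      have hxT : x ∉ T := ((mem_extraEdges G).mp hxmem).2.2.1
      refine ⟨?_, _, ((mem_extraEdges G).mp hxmem).2.1, by simp⟩
      intro hc
      exact hxT (hc ▸ hsub _ (by simp))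

end A2

section A3
variable {V : Type*} [Fintype V]

lemma traceable_of_dominating (G : SimpleGraph V) (hE : G.edgeSet.Nonempty)
    {u v : V} (t : G.Walk u v) (ht : t.IsTrail)
    (hdom : ∀ e ∈ G.edgeSet, ∃ x ∈ t.support, x ∈ e) : TraceableGraph G.lineGraph := by
  classical
  set T := t.edges with hT0
  set l := edgeList G T t [] with hl
  have hmemE : ∀ e ∈ l, e ∈ G.edgeSet := edgeList_mem_edgeSet G t []
  have hcompl : ∀ e ∈ G.edgeSet, e ∈ l := by
    intro e he
    by_cases hT : e ∈ T
    · exact edgeList_trail_subset G t [] e hT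
    · exact edgeList_complete G t [] e he hT (by simp) (hdom e he)
  have hnd : l.Nodup := edgeList_nodup G t [] ht (fun e he => he)
  have hch : List.Chain' erel l := edgeList_chain' G t [] ht (fun e he => he)
  set l' : List G.edgeSet := l.attachWith (· ∈ G.edgeSet) hmemE with hl'
  have hmap : l'.map Subtype.val = l := l.attachWith_map_subtype_val hmemE
  have hch2 : List.Chain' (fun a b : G.edgeSet => erel (a : Sym2 V) (b : Sym2 V)) l' := by
    refine (List.isChain_map (R := erel) Subtype.val).mp ?_
    rw [hmap]
    exact hch
  have hch' : List.Chain' G.lineGraph.Adj l' := by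
    refine hch2.imp ?_
    intro a b hab
    rw [lineGraph_adj_iff_exists]
    exact ⟨fun hc => hab.1 (congrArg Subtype.val hc), hab.2⟩
  have hnd' : l'.Nodup := by
    refine List.Nodup.of_map Subtype.val ?_
    rw [hmap]; exact hnd
  have hmem' : ∀ w : G.edgeSet, w ∈ l' := by
    intro w
    have : (w : Sym2 V) ∈ l := hcompl _ w.2
    rw [← hmap, List.mem_map] at this
    obtain ⟨g, hg, hgv⟩ := this
    rwa [Subtype.ext hgv.symm]
  rcases hl'' : l' with _ | ⟨a, rest⟩
  · obtain ⟨e0, he0⟩ := hE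
    exact absurd (hl'' ▸ hmem' ⟨e0, he0⟩) (by simp)
  · have hchain : List.Chain G.lineGraph.Adj a rest := by
      rw [hl''] at hch'
      exact hch'
    obtain ⟨b, p, hp⟩ := walk_of_chain G.lineGraph a rest hchain
    refine ⟨a, b, p, ?_, ?_⟩
    · rw [Walk.isPath_def, hp, ← hl'']
      exact hnd'
    · intro w
      rw [hp, ← hl'']
      exact hmem' w


end A3

/-- Xiong–Zong: for a finite connected simple graph `G` with at least one
edge, `L(G)` is traceable iff `G` has a dominating trail. -/
theorem lineGraph_traceable_iff_dominating_trail {V : Type*} [Fintype V]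
    (G : SimpleGraph V) (hG : G.Connected) (hE : G.edgeSet.Nonempty) :
    TraceableGraph G.lineGraph ↔
      ∃ (u v : V) (t : G.Walk u v), t.IsTrail ∧
        ∀ e ∈ G.edgeSet, ∃ x ∈ t.support, x ∈ e := by

  constructor
  · rintro ⟨u, v, p, hp, hall⟩
    have hsup := p.support_eq_cons
    have hchain : List.Chain' G.lineGraph.Adj (u :: p.support.tail) := by
      rw [← hsup]; exact p.isChain_adj_support
    have hnd : (u :: p.support.tail).Nodup := by
      rw [← hsup]; exact hp.support_nodup
    obtain ⟨a, b, t, ht, _, _, hdom⟩ := trail_of_chain G p.support.tail u hchain hnd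
    refine ⟨a, b, t, ht, ?_⟩
    intro e he
    exact hdom ⟨e, he⟩ (hsup ▸ hall ⟨e, he⟩)
  · rintro ⟨u, v, t, ht, hdom⟩
    exact traceable_of_dominating G hE t ht hdom
end

section
/- Let T be a finite caterpillar that is not a path. Then T itself contains no Hamiltonian path, but its line graph L(T) contains a Hamiltonian path; consequently h_p(T) = 1. -/
open SimpleGraph

section Aux
variable {V : Type*} {G : SimpleGraph V}
open SimpleGraph Walk

lemma walk_of_chain_s6 (G : SimpleGraph V) (a : V) (l : List V) (h : List.Chain G.Adj a l) :
    ∃ (b : V) (p : G.Walk a b), p.support = a :: l := by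
  induction l generalizing a with
  | nil => exact ⟨a, Walk.nil, rfl⟩
  | cons x l ih =>
    simp only [List.Chain, List.isChain_cons_cons] at h
    obtain ⟨b, p, hp⟩ := ih x h.2
    exact ⟨b, Walk.cons h.1 p, by simp [hp]⟩

lemma traceable_of_list (G : SimpleGraph V) (l : List V) (hne : l ≠ [])
    (hc : l.Chain' G.Adj) (hn : l.Nodup) (hall : ∀ v, v ∈ l) : TraceableGraph G := by
  obtain ⟨a, t, rfl⟩ := List.exists_cons_of_ne_nil hne
  obtain ⟨b, p, hp⟩ := walk_of_chain_s6 G a t hc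
  refine ⟨a, b, p, ?_, ?_⟩
  · rw [Walk.isPath_def, hp]; exact hn
  · intro w; rw [hp]; exact hall w

lemma subpath_exists {u v : V} {p : G.Walk u v} (hp : p.IsPath) {x y : V}
    (hx : x ∈ p.support) (hy : y ∈ p.support) :
    ∃ q : G.Walk x y, q.IsPath ∧ (∀ z ∈ q.support, z ∈ p.support) ∧
      ∀ e ∈ q.edges, e ∈ p.edges := by
  classical
  by_cases h : y ∈ (p.dropUntil x hx).support
  · exact ⟨(p.dropUntil x hx).takeUntil y h, (hp.dropUntil hx).takeUntil h,
      fun z hz => support_dropUntil_subset _ hx (support_takeUntil_subset _ h hz),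
      fun e he => edges_dropUntil_subset _ hx (edges_takeUntil_subset _ h he)⟩
  · have hy' : y ∈ (p.takeUntil x hx).support := by
      have := p.take_spec hx
      rw [← this, mem_support_append_iff] at hy
      tauto
    refine ⟨((p.takeUntil x hx).dropUntil y hy').reverse,
      ((hp.takeUntil hx).dropUntil hy').reverse, ?_, ?_⟩
    · intro z hz
      rw [support_reverse, List.mem_reverse] at hz
      exact support_takeUntil_subset _ hx (support_dropUntil_subset _ hy' hz)
    · intro e he
      rw [edges_reverse, List.mem_reverse] at he
      exact edges_takeUntil_subset _ hx (edges_dropUntil_subset _ hy' he)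

lemma tree_adj_edge (hT : G.IsTree) {u v : V} {p : G.Walk u v} (hp : p.IsPath)
    {x y : V} (hx : x ∈ p.support) (hy : y ∈ p.support) (hxy : G.Adj x y) :
    s(x, y) ∈ p.edges := by
  obtain ⟨q, hq, _, hqe⟩ := subpath_exists hp hx hy
  have h1 : (Walk.cons hxy Walk.nil).IsPath := by
    simp [Walk.isPath_def, hxy.ne]
  have := (hT.existsUnique_path x y).unique hq h1
  apply hqe
  rw [this]
  simp

lemma endpoint_on_path (hT : G.IsTree) {u v : V} {W : G.Walk u v} (hW : W.IsPath)
    (hcentral : ∀ w : V, w ∈ W.support ∨ ∃ x ∈ W.support, G.Adj x w)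
    {e : Sym2 V} (he : e ∈ G.edgeSet) : ∃ z ∈ W.support, z ∈ e := by
  induction e with
  | _ x y =>
    rw [SimpleGraph.mem_edgeSet] at he
    by_cases hx : x ∈ W.support
    · exact ⟨x, hx, by simp⟩
    by_cases hy : y ∈ W.support
    · exact ⟨y, hy, by simp⟩
    exfalso
    obtain ⟨a, ha, hax⟩ := (hcentral x).resolve_left hx
    obtain ⟨b, hb, hby⟩ := (hcentral y).resolve_left hy
    obtain ⟨r, hr, hrsup, _⟩ := subpath_exists hW ha hb
    have hxr : x ∉ r.support := fun h => hx (hrsup x h)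
    have hyr : y ∉ r.support := fun h => hy (hrsup y h)
    have h2 : (Walk.cons hax.symm (r.concat hby)).IsPath := by
      rw [Walk.isPath_def]
      simp only [Walk.support_cons, Walk.support_concat]
      simp only [List.nodup_cons, List.mem_append, List.mem_singleton]
      refine ⟨?_, ?_⟩
      · push_neg
        exact ⟨hxr, he.ne⟩
      · rw [List.nodup_append]
        exact ⟨hr.support_nodup, by simp, by simpa using fun (z : V) (hz : z ∈ r.support) (hzy : z = y) => hyr (hzy ▸ hz)⟩
    have h1 : (Walk.cons he Walk.nil).IsPath := by
      simp [Walk.isPath_def, he.ne]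
    have := (hT.existsUnique_path x y).unique h1 h2
    have hlen := congrArg Walk.length this
    simp [Walk.length_concat] at hlen

end Aux


section Aux2
variable {V : Type*} {G : SimpleGraph V}
open SimpleGraph Walk

open scoped Classical in
noncomputable def pendN (G : SimpleGraph V) [Fintype V] (E₀ : List (Sym2 V)) (u : V) :
    List (Sym2 V) :=
  ((G.incidenceSet u).toFinset.filter (fun e => e ∉ E₀)).toList

lemma mem_pendN [Fintype V] {E₀ : List (Sym2 V)} {u : V} {e : Sym2 V} :
    e ∈ pendN G E₀ u ↔ e ∈ G.incidenceSet u ∧ e ∉ E₀ := by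
  classical
  simp [pendN]

lemma pendN_nodup [Fintype V] {E₀ : List (Sym2 V)} {u : V} : (pendN G E₀ u).Nodup :=
  Finset.nodup_toList _

noncomputable def eList (G : SimpleGraph V) [Fintype V] (E₀ : List (Sym2 V)) :
    ∀ {u v : V}, G.Walk u v → List (Sym2 V)
  | u, _, Walk.nil => pendN G E₀ u
  | _, _, @Walk.cons _ _ u w _ _ p => pendN G E₀ u ++ (s(u, w) :: eList G E₀ p)

lemma mem_eList [Fintype V] {E₀ : List (Sym2 V)} {e : Sym2 V} :
    ∀ {u v : V} (W : G.Walk u v),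
      e ∈ eList G E₀ W ↔ e ∈ W.edges ∨ ∃ z ∈ W.support, e ∈ G.incidenceSet z ∧ e ∉ E₀
  | u, _, Walk.nil => by simp [eList, mem_pendN]
  | _, _, Walk.cons h p => by
    simp only [eList, List.mem_append, List.mem_cons, mem_eList p, mem_pendN,
      Walk.edges_cons, Walk.support_cons]
    aesop

lemma eList_nodup [Fintype V] {E₀ : List (Sym2 V)} {S : List V}
    (hS : ∀ x y, x ∈ S → y ∈ S → G.Adj x y → s(x, y) ∈ E₀) :
    ∀ {u v : V} (W : G.Walk u v), W.IsPath → (∀ f ∈ W.edges, f ∈ E₀) →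
      (∀ z ∈ W.support, z ∈ S) → (eList G E₀ W).Nodup
  | u, _, Walk.nil, _, _, _ => pendN_nodup
  | _, _, @Walk.cons _ _ u w _ h p, hpath, hE, hsub => by
    have hup : u ∉ p.support := (Walk.cons_isPath_iff h p).mp hpath |>.2
    have hppath : p.IsPath := hpath.of_cons
    have hE' : ∀ f ∈ p.edges, f ∈ E₀ := fun f hf => hE f (by simp [hf])
    have hsub' : ∀ z ∈ p.support, z ∈ S := fun z hz => hsub z (by simp [hz])
    have huw : s(u, w) ∈ E₀ := hE _ (by simp)
    have key : ∀ f ∈ pendN G E₀ u, f ∉ eList G E₀ p := by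
      intro f hf hf'
      rw [mem_pendN] at hf
      rcases (mem_eList p).mp hf' with hfe | ⟨z, hz, hinc, _⟩
      · exact hf.2 (hE' f hfe)
      · -- f incident to u and to z, u ≠ z
        have hzu : z ≠ u := fun h' => hup (h' ▸ hz)
        have : f = s(u, z) := by
          rw [← Sym2.mem_and_mem_iff (Ne.symm hzu)]
          exact ⟨hf.1.2, hinc.2⟩
        apply hf.2
        rw [this]
        have hadj : G.Adj u z := G.mem_edgeSet.mp (this ▸ hf.1.1)
        exact hS u z (hsub u (by simp)) (hsub' z hz) hadj
    have huwp : s(u, w) ∉ eList G E₀ p := by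
      intro hmem
      rcases (mem_eList p).mp hmem with hfe | ⟨z, hz, hinc, hne⟩
      · exact hup (Walk.fst_mem_support_of_mem_edges p hfe)
      · exact hne huw
    simp only [eList, List.nodup_append, List.nodup_cons, List.mem_cons]
    refine ⟨pendN_nodup, ⟨huwp, eList_nodup hS p hppath hE' hsub'⟩, ?_⟩
    intro f hf g hmem hfg
    rcases (mem_pendN (G := G)).mp hf with ⟨_, hne⟩
    rcases hmem with h' | h'
    · exact hne (hfg ▸ h' ▸ huw)
    · exact key f hf (hfg ▸ h')
end Aux2

section Aux3
variable {V : Type*} {G : SimpleGraph V}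
open SimpleGraph Walk

lemma chain'_and {α : Type*} {R S : α → α → Prop} (l : List α) (hR : l.Chain' R)
    (hS : l.Chain' S) : l.Chain' fun a b => R a b ∧ S a b := by
  induction l with
  | nil => exact List.IsChain.nil
  | cons a l ih =>
    cases l with
    | nil => exact List.IsChain.singleton _
    | cons b t =>
      simp only [List.Chain', List.isChain_cons_cons] at hR hS ⊢
      exact ⟨⟨hR.1, hS.1⟩, ih hR.2 hS.2⟩

lemma chain'_pmap {α β : Type*} {P : α → Prop} {f : ∀ a, P a → β} {R : β → β → Prop}
    {S : α → α → Prop} (hf : ∀ a ha b hb, S a b → R (f a ha) (f b hb)) :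
    ∀ (l : List α) (H : ∀ a ∈ l, P a), l.Chain' S → (l.pmap f H).Chain' R := by
  intro l
  induction l with
  | nil => intro _ _; exact List.IsChain.nil
  | cons a l ih =>
    intro H h
    cases l with
    | nil => exact List.IsChain.singleton _
    | cons b t =>
      simp only [List.Chain', List.isChain_cons_cons] at h
      simp only [List.Chain', List.pmap, List.isChain_cons_cons]
      refine ⟨hf _ _ _ _ h.1, ?_⟩
      have := ih (fun x hx => H x (List.mem_cons_of_mem _ hx)) h.2
      rwa [List.pmap] at this

lemma chain'_share_of_mem {u : V} {l : List (Sym2 V)} (h : ∀ e ∈ l, u ∈ e) :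
    l.Chain' (fun e f => ∃ x, x ∈ e ∧ x ∈ f) :=
  (List.pairwise_of_forall_mem_list fun a ha b hb => ⟨u, h a ha, h b hb⟩).isChain

lemma eList_head [Fintype V] {E₀ : List (Sym2 V)} :
    ∀ {u v : V} (W : G.Walk u v) {e : Sym2 V}, e ∈ (eList G E₀ W).head? → u ∈ e
  | u, _, Walk.nil, e, he => by
    have : e ∈ pendN G E₀ u := List.mem_of_mem_head? he
    exact ((mem_pendN (G := G)).mp this).1.2
  | _, _, @Walk.cons _ _ u w _ h p, e, he => by
    rw [eList] at he
    cases hpn : pendN G E₀ u with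
    | nil =>
      rw [hpn] at he
      simp only [List.nil_append, List.head?_cons, Option.mem_some_iff] at he
      subst he
      simp
    | cons a t =>
      rw [hpn] at he
      simp only [List.cons_append, List.head?_cons, Option.mem_some_iff] at he
      subst he
      have : a ∈ pendN G E₀ u := by rw [hpn]; exact List.mem_cons_self
      exact ((mem_pendN (G := G)).mp this).1.2

lemma eList_chain [Fintype V] {E₀ : List (Sym2 V)} :
    ∀ {u v : V} (W : G.Walk u v),
      (eList G E₀ W).Chain' (fun e f => ∃ x, x ∈ e ∧ x ∈ f)
  | u, _, Walk.nil =>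
    chain'_share_of_mem (u := u) fun e he => ((mem_pendN (G := G)).mp he).1.2
  | _, _, @Walk.cons _ _ u w _ h p => by
    rw [eList]; simp only [List.Chain', List.isChain_append]
    refine ⟨?_, ?_, ?_⟩
    · exact chain'_share_of_mem (u := u) fun e he => ((mem_pendN (G := G)).mp he).1.2
    · rw [List.isChain_cons]
      refine ⟨fun y hy => ⟨w, ?_, eList_head p hy⟩, eList_chain p⟩
      simp
    · intro x hx y hy
      have hx' : x ∈ pendN G E₀ u := List.mem_of_mem_getLast? hx
      simp only [List.head?_cons, Option.mem_some_iff] at hy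
      subst hy
      exact ⟨u, ((mem_pendN (G := G)).mp hx').1.2, by simp⟩
end Aux3


/-- a finite caterpillar that is not a path has no hamiltonian path, but its
line graph has a hamiltonian path; consequently `h_p(T) = 1`. -/
theorem caterpillar_hpIndex_eq_one {V : Type} [Fintype V] (T : SimpleGraph V)
    (hcat : IsCaterpillar T) (hP : ¬ IsPathGraph T) :
    ¬ TraceableGraph T ∧ TraceableGraph T.lineGraph ∧ hpIndex ⟨V, T⟩ = 1 := by
  classical
  obtain ⟨hT, P, hPpath, hPcentral⟩ := hcat
  -- Part A: T itself has no hamiltonian path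
  have hA : ¬ TraceableGraph T := by
    rintro ⟨u, v, p, hp, hall⟩
    apply hP
    refine ⟨u, v, p, hp, hall, ?_⟩
    intro e he
    have hsupcard : p.support.length = Fintype.card V := by
      have h1 : p.support.toFinset = Finset.univ := by
        ext z; simp [hall z]
      calc p.support.length = p.support.toFinset.card :=
            (List.toFinset_card_of_nodup hp.support_nodup).symm
        _ = Fintype.card V := by rw [h1, Finset.card_univ]
    have hlen : p.length + 1 = Fintype.card V := by
      rw [← hsupcard, Walk.length_support]
    have hecard : p.edges.toFinset.card = p.length := by
      rw [List.toFinset_card_of_nodup hp.edges_nodup, Walk.length_edges]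
    have hsub : p.edges.toFinset ⊆ T.edgeFinset := by
      intro f hf
      rw [List.mem_toFinset] at hf
      exact mem_edgeFinset.mpr (p.edges_subset_edgeSet hf)
    have hcards : T.edgeFinset.card ≤ p.edges.toFinset.card := by
      have := hT.card_edgeFinset
      omega
    have heq := Finset.eq_of_subset_of_card_le hsub hcards
    have : e ∈ p.edges.toFinset := heq ▸ mem_edgeFinset.mpr he
    exact List.mem_toFinset.mp this
  -- T has at least one edge
  have hedge : ∃ e₀ : Sym2 V, e₀ ∈ T.edgeSet := by
    by_contra hno
    push_neg at hno
    apply hP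
    obtain ⟨v⟩ := hT.isConnected.nonempty
    have hsing : ∀ w : V, w = v := by
      intro w
      obtain ⟨q⟩ := hT.isConnected.preconnected w v
      cases q with
      | nil => rfl
      | cons h _ => exact absurd (T.mem_edgeSet.mpr h) (hno _)
    exact ⟨v, v, Walk.nil, by simp [Walk.isPath_def], fun w => by simp [hsing w],
      fun e he => absurd he (hno e)⟩
  obtain ⟨e₀, he₀⟩ := hedge
  -- Part B: the line graph has a hamiltonian path
  set W := P.walk with hWdef
  set E₀ := W.edges with hE₀def
  have hcent : ∀ w : V, w ∈ W.support ∨ ∃ x ∈ W.support, T.Adj x w := hPcentral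
  have hS : ∀ x y, x ∈ W.support → y ∈ W.support → T.Adj x y → s(x, y) ∈ E₀ :=
    fun x y hx hy hxy => tree_adj_edge hT hPpath hx hy hxy
  have hmemL : ∀ e ∈ T.edgeSet, e ∈ eList T E₀ W := by
    intro e he
    rw [mem_eList]
    by_cases hE : e ∈ E₀
    · exact Or.inl hE
    · obtain ⟨z, hz, hze⟩ := endpoint_on_path hT hPpath hcent he
      exact Or.inr ⟨z, hz, ⟨he, hze⟩, hE⟩
  have hLsub : ∀ e ∈ eList T E₀ W, e ∈ T.edgeSet := by
    intro e he
    rcases (mem_eList W).mp he with h | ⟨z, _, hinc, _⟩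
    · exact W.edges_subset_edgeSet h
    · exact hinc.1
  have hnodup : (eList T E₀ W).Nodup :=
    eList_nodup hS W hPpath (fun f hf => hf) (fun z hz => hz)
  have hchain2 : (eList T E₀ W).Chain' (fun e f => e ≠ f ∧ ∃ x, x ∈ e ∧ x ∈ f) :=
    chain'_and _ hnodup.isChain (eList_chain (G := T) (E₀ := E₀) W)
  have hB : TraceableGraph T.lineGraph := by
    apply traceable_of_list T.lineGraph
      ((eList T E₀ W).pmap (fun e h => (⟨e, h⟩ : T.edgeSet)) hLsub)
    · intro h
      rw [List.pmap_eq_nil_iff] at h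
      rw [h] at hmemL
      simpa using hmemL e₀ he₀
    · refine chain'_pmap ?_ _ hLsub hchain2
      rintro a ha b hb ⟨hne, x, hx1, hx2⟩
      rw [lineGraph_adj_iff_exists]
      exact ⟨fun hh => hne (congrArg Subtype.val hh), x, hx1, hx2⟩
    · exact hnodup.pmap fun a ha b hb h => congrArg Subtype.val h
    · intro w
      rw [List.mem_pmap]
      exact ⟨w.1, hmemL w.1 w.2, rfl⟩
  refine ⟨hA, hB, ?_⟩
  -- Part C: the index is 1
  have h1 : 1 ∈ {n | TraceableGraph (iterLine n ⟨V, T⟩).2} := by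
    show TraceableGraph (iterLine 1 ⟨V, T⟩).2
    simp only [iterLine, Function.iterate_one]
    exact hB
  have h0 : 0 ∉ {n | TraceableGraph (iterLine n ⟨V, T⟩).2} := by
    intro h
    simp only [Set.mem_setOf_eq, iterLine, Function.iterate_zero, id_eq] at h
    exact hA h
  rw [hpIndex]
  refine le_antisymm (Nat.sInf_le h1) ?_
  exact Nat.one_le_iff_ne_zero.mpr fun hz => h0 (hz ▸ Nat.sInf_mem ⟨1, h1⟩)
end

section
/- Let G be a finite connected simple graph, let H be a connected subgraph of G, and let c_1, c_2, c_3 be three distinct cutvertices of G lying in H such that for each i there exists a vertex c'_i adjacent to c_i with c'_i not in H, where c'_1, c'_2, c'_3 are pairwise distinct and each c'_i lies in a component of G − c_i disjoint from H. Then no path of G contains all three vertices c'_1, c'_2, c'_3; in particular G has no Hamiltonian path. -/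
open SimpleGraph

private lemma reachable_induce_of_walk' {V : Type*} {G : SimpleGraph V} {c : V} :
    ∀ {a b : V} (p : G.Walk a b), (∀ x ∈ p.support, x ≠ c) →
    ∀ (ha : a ≠ c) (hb : b ≠ c),
      (G.induce {x | x ≠ c}).Reachable ⟨a, ha⟩ ⟨b, hb⟩ := by
  intro a b p
  induction p with
  | nil => intro _ ha hb; exact Reachable.refl _
  | @cons u v w h q ih =>
    intro hsup ha hb
    have hv : v ≠ c := hsup v (by simp)
    have h1 : (G.induce {x | x ≠ c}).Adj ⟨u, ha⟩ ⟨v, hv⟩ := by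
      simpa [SimpleGraph.comap_adj] using h
    exact h1.reachable.trans (ih (fun x hx => hsup x (by simp [hx])) hv hb)

private lemma cut_mem_walk_support {V : Type*} {G : SimpleGraph V} {H : G.Subgraph}
    {cj ci cj' ci' : V}
    (hadjj : G.Adj cj cj') (hadji : G.Adj ci ci')
    (hmj : cj ∈ H.verts) (hmi : ci ∈ H.verts) (hni : ci' ∉ H.verts)
    (hij : ci ≠ cj)
    (hcomp : ∀ w : ({x | x ≠ cj} : Set V),
      (G.induce {x | x ≠ cj}).Reachable ⟨cj', hadjj.ne'⟩ w → (w : V) ∉ H.verts)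
    (q : G.Walk cj' ci') : cj ∈ q.support := by
  by_contra hc
  have hall : ∀ x ∈ q.support, x ≠ cj := fun x hx hxe => hc (hxe ▸ hx)
  have hci' : ci' ≠ cj := fun h => hni (h ▸ hmj)
  have hr := reachable_induce_of_walk' q hall hadjj.ne' hci'
  have hadj : (G.induce {x | x ≠ cj}).Adj ⟨ci', hci'⟩ ⟨ci, hij⟩ := by
    simpa [SimpleGraph.comap_adj] using hadji.symm
  exact hcomp ⟨ci, hij⟩ (hr.trans hadj.reachable) hmi

private lemma eq_of_mem_take_mem_drop {V : Type*} [DecidableEq V] {G : SimpleGraph V} {a b u x : V}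
    {p : G.Walk a b} (hp : p.IsPath) (hu : u ∈ p.support)
    (hx1 : x ∈ (p.takeUntil u hu).support) (hx2 : x ∈ (p.dropUntil u hu).support) :
    x = u := by
  have hnd := hp.support_nodup
  rw [← SimpleGraph.Walk.take_spec p hu, SimpleGraph.Walk.support_append] at hnd
  have hdisj := List.disjoint_of_nodup_append hnd
  rw [SimpleGraph.Walk.support_eq_cons] at hx2
  rcases List.mem_cons.mp hx2 with h | h
  · exact h
  · exact absurd h (hdisj hx1)

private lemma middle_contra {V : Type*} [DecidableEq V] {G : SimpleGraph V} {a b m' x z m : V}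
    {p : G.Walk a b} (hp : p.IsPath) (hm' : m' ∈ p.support)
    (hx : x ∈ (p.takeUntil m' hm').support)
    (hz : z ∈ (p.dropUntil m' hm').support)
    (hmm' : m ≠ m')
    (k1 : ∀ q : G.Walk x m', m ∈ q.support)
    (k2 : ∀ q : G.Walk m' z, m ∈ q.support) : False := by
  have hx' : x ∈ p.support := SimpleGraph.Walk.support_takeUntil_subset p hm' hx
  set seg1 := (p.takeUntil m' hm').dropUntil x hx with hseg1
  set seg2 := (p.dropUntil m' hm').takeUntil z hz with hseg2
  have hm1 : m ∈ (p.takeUntil m' hm').support :=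
    SimpleGraph.Walk.support_dropUntil_subset _ hx (k1 seg1)
  have hm2 : m ∈ (p.dropUntil m' hm').support :=
    SimpleGraph.Walk.support_takeUntil_subset _ hz (k2 seg2)
  exact hmm' (eq_of_mem_take_mem_drop hp hm' hm1 hm2)

private lemma mem_take_or_drop {V : Type*} [DecidableEq V] {G : SimpleGraph V} {a b u v : V}
    (p : G.Walk a b) (hu : u ∈ p.support) (hv : v ∈ p.support) :
    v ∈ (p.takeUntil u hu).support ∨ v ∈ (p.dropUntil u hu).support := by
  rw [← SimpleGraph.Walk.take_spec p hu] at hv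
  exact (SimpleGraph.Walk.mem_support_append_iff _ _).mp hv

/-- if a connected graph `G` has a connected subgraph `H` containing three
distinct cutvertices `c₁, c₂, c₃`, each having a neighbour `cᵢ'` outside `H` lying in a
component of `G - cᵢ` disjoint from `H` (the `cᵢ'` pairwise distinct), then no path of `G`
contains all of `c₁', c₂', c₃'`; in particular `G` has no hamiltonian path. -/
theorem no_path_through_three_private_neighbours {V : Type*} (G : SimpleGraph V)
    (hG : G.Connected) (H : G.Subgraph) (hH : H.Connected)
    (c₁ c₂ c₃ : V) (hc12 : c₁ ≠ c₂) (hc13 : c₁ ≠ c₃) (hc23 : c₂ ≠ c₃)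
    (hcut1 : IsCutvertex G c₁) (hcut2 : IsCutvertex G c₂) (hcut3 : IsCutvertex G c₃)
    (hm1 : c₁ ∈ H.verts) (hm2 : c₂ ∈ H.verts) (hm3 : c₃ ∈ H.verts)
    (c₁' c₂' c₃' : V)
    (hadj1 : G.Adj c₁ c₁') (hadj2 : G.Adj c₂ c₂') (hadj3 : G.Adj c₃ c₃')
    (hn1 : c₁' ∉ H.verts) (hn2 : c₂' ∉ H.verts) (hn3 : c₃' ∉ H.verts)
    (hd12 : c₁' ≠ c₂') (hd13 : c₁' ≠ c₃') (hd23 : c₂' ≠ c₃')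
    (hcomp1 : ∀ w : ({x | x ≠ c₁} : Set V),
      (G.induce {x | x ≠ c₁}).Reachable ⟨c₁', hadj1.ne'⟩ w → (w : V) ∉ H.verts)
    (hcomp2 : ∀ w : ({x | x ≠ c₂} : Set V),
      (G.induce {x | x ≠ c₂}).Reachable ⟨c₂', hadj2.ne'⟩ w → (w : V) ∉ H.verts)
    (hcomp3 : ∀ w : ({x | x ≠ c₃} : Set V),
      (G.induce {x | x ≠ c₃}).Reachable ⟨c₃', hadj3.ne'⟩ w → (w : V) ∉ H.verts) :
    (∀ (a b : V) (p : G.Walk a b), p.IsPath →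
      ¬ (c₁' ∈ p.support ∧ c₂' ∈ p.support ∧ c₃' ∈ p.support)) ∧
    ¬ TraceableGraph G := by

  classical
  have rev : ∀ {u v m : V}, (∀ q : G.Walk u v, m ∈ q.support) →
      ∀ q : G.Walk v u, m ∈ q.support := by
    intro u v m h q
    have := h q.reverse
    rwa [SimpleGraph.Walk.support_reverse, List.mem_reverse] at this
  have A12 : ∀ q : G.Walk c₁' c₂', c₁ ∈ q.support := fun q =>
    cut_mem_walk_support hadj1 hadj2 hm1 hm2 hn2 hc12.symm hcomp1 q
  have A13 : ∀ q : G.Walk c₁' c₃', c₁ ∈ q.support := fun q =>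
    cut_mem_walk_support hadj1 hadj3 hm1 hm3 hn3 hc13.symm hcomp1 q
  have A21 : ∀ q : G.Walk c₂' c₁', c₂ ∈ q.support := fun q =>
    cut_mem_walk_support hadj2 hadj1 hm2 hm1 hn1 hc12 hcomp2 q
  have A23 : ∀ q : G.Walk c₂' c₃', c₂ ∈ q.support := fun q =>
    cut_mem_walk_support hadj2 hadj3 hm2 hm3 hn3 hc23.symm hcomp2 q
  have A31 : ∀ q : G.Walk c₃' c₁', c₃ ∈ q.support := fun q =>
    cut_mem_walk_support hadj3 hadj1 hm3 hm1 hn1 hc13 hcomp3 q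
  have A32 : ∀ q : G.Walk c₃' c₂', c₃ ∈ q.support := fun q =>
    cut_mem_walk_support hadj3 hadj2 hm3 hm2 hn2 hc23 hcomp3 q
  have main : ∀ (a b : V) (p : G.Walk a b), p.IsPath →
      ¬ (c₁' ∈ p.support ∧ c₂' ∈ p.support ∧ c₃' ∈ p.support) := by
    rintro a b p hp ⟨h1, h2, h3⟩
    rcases mem_take_or_drop p h1 h2 with h2t | h2d <;>
      rcases mem_take_or_drop p h1 h3 with h3t | h3d
    · -- both c₂', c₃' before c₁'
      set A := p.takeUntil c₁' h1 with hAdef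
      have hA : A.IsPath := hp.takeUntil h1
      rcases mem_take_or_drop A h2t h3t with h3t2 | h3d2
      · -- c₃' before c₂' (within A); middle c₂'
        exact middle_contra hA h2t h3t2
          (SimpleGraph.Walk.end_mem_support _) hadj2.ne (rev A23) A21
      · -- c₂' before c₃' before c₁'; middle c₃'
        have hD : (A.dropUntil c₂' h2t).IsPath := hA.dropUntil h2t
        exact middle_contra hD h3d2
          (SimpleGraph.Walk.start_mem_support _)
          (SimpleGraph.Walk.end_mem_support _) hadj3.ne (rev A32) A31
    · -- c₂' before c₁' before c₃'; middle c₁'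
      exact middle_contra hp h1 h2t h3d hadj1.ne (rev A12) A13
    · -- c₃' before c₁' before c₂'; middle c₁'
      exact middle_contra hp h1 h3t h2d hadj1.ne (rev A13) A12
    · -- both c₂', c₃' after c₁'
      set B := p.dropUntil c₁' h1 with hBdef
      have hB : B.IsPath := hp.dropUntil h1
      rcases mem_take_or_drop B h2d h3d with h3t2 | h3d2
      · -- c₁' ... c₃' ... c₂'; middle c₃'
        have hC : (B.takeUntil c₂' h2d).IsPath := hB.takeUntil h2d
        exact middle_contra hC h3t2
          (SimpleGraph.Walk.start_mem_support _)
          (SimpleGraph.Walk.end_mem_support _) hadj3.ne (rev A31) A32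
      · -- c₁' ... c₂' ... c₃'; middle c₂'
        exact middle_contra hB h2d
          (SimpleGraph.Walk.start_mem_support _) h3d2 hadj2.ne (rev A21) A23
  refine ⟨main, ?_⟩
  rintro ⟨u, v, p, hp, hall⟩
  exact main u v p hp ⟨hall _, hall _, hall _⟩
end
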